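/- For a fixed complex d×d matrix A with operator norm bound Λ, the function p ↦ Δ_p(A) is Lipschitz continuous and nonincreasing on [2,∞). -/

import Mathlib

open scoped ComplexConjugate

noncomputable def Ip (p : ℝ) {d : ℕ} (ξ : EuclideanSpace ℂ (Fin d)) : EuclideanSpace ℂ (Fin d) :=
  WithLp.toLp 2 (fun i => ξ i + ((1 - 2 / p : ℝ) : ℂ) * conj (ξ i))

noncomputable def mulVecE {d : ℕ} (A : Matrix (Fin d) (Fin d) ℂ)
    (ξ : EuclideanSpace ℂ (Fin d)) : EuclideanSpace ℂ (Fin d) :=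
  WithLp.toLp 2 (fun i => ∑ j, A i j * ξ j)

noncomputable def Delta (p : ℝ) {d : ℕ} (A : Matrix (Fin d) (Fin d) ℂ) : ℝ :=
  sInf { r : ℝ | ∃ ξ : EuclideanSpace ℂ (Fin d), ‖ξ‖ = 1 ∧
    r = (@inner ℂ _ _ (mulVecE A ξ) (Ip p ξ)).re }

noncomputable def conjV {d : ℕ} (ξ : EuclideanSpace ℂ (Fin d)) : EuclideanSpace ℂ (Fin d) :=
  WithLp.toLp 2 (fun i => conj (ξ i))

lemma norm_conjV {d : ℕ} (ξ : EuclideanSpace ℂ (Fin d)) : ‖conjV ξ‖ = ‖ξ‖ := by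
  simp [EuclideanSpace.norm_eq, conjV]

lemma inner_Ip {d : ℕ} (A : Matrix (Fin d) (Fin d) ℂ) (p : ℝ) (ξ : EuclideanSpace ℂ (Fin d)) :
    (@inner ℂ _ _ (mulVecE A ξ) (Ip p ξ)).re
      = (@inner ℂ _ _ (mulVecE A ξ) ξ).re
        + (1 - 2/p) * (@inner ℂ _ _ (mulVecE A ξ) (conjV ξ)).re := by
  have hIp : Ip p ξ = ξ + ((1 - 2/p : ℝ) : ℂ) • conjV ξ := by
    ext i
    simp [Ip, conjV]
  rw [hIp, inner_add_right, inner_smul_right]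
  simp [Complex.add_re, Complex.mul_re]

lemma mulVecE_smul {d : ℕ} (A : Matrix (Fin d) (Fin d) ℂ) (c : ℂ) (ξ : EuclideanSpace ℂ (Fin d)) :
    mulVecE A (c • ξ) = c • mulVecE A ξ := by
  ext i
  simp [mulVecE, Finset.mul_sum, mul_left_comm]

lemma g_smul_I {d : ℕ} (A : Matrix (Fin d) (Fin d) ℂ) (ξ : EuclideanSpace ℂ (Fin d)) :
    (@inner ℂ _ _ (mulVecE A (Complex.I • ξ)) (Complex.I • ξ)).re
      = (@inner ℂ _ _ (mulVecE A ξ) ξ).re := by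
  rw [mulVecE_smul]
  simp [inner_smul_left, inner_smul_right, Complex.mul_I_re]

lemma h_smul_I {d : ℕ} (A : Matrix (Fin d) (Fin d) ℂ) (ξ : EuclideanSpace ℂ (Fin d)) :
    (@inner ℂ _ _ (mulVecE A (Complex.I • ξ)) (conjV (Complex.I • ξ))).re
      = - (@inner ℂ _ _ (mulVecE A ξ) (conjV ξ)).re := by
  rw [mulVecE_smul]
  have : conjV (Complex.I • ξ) = (-Complex.I) • conjV ξ := by
    ext i; simp [conjV]
  rw [this]
  simp [inner_smul_left, inner_smul_right]



/-- `p ↦ Δ_p(A)` is Lipschitz and nonincreasing on `[2,∞)`. -/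
theorem stmt2 {d : ℕ} (hd : 0 < d) (A : Matrix (Fin d) (Fin d) ℂ) (Λ : ℝ)
    (hΛ : ∀ ξ σ : EuclideanSpace ℂ (Fin d),
      ‖(@inner ℂ _ _ (mulVecE A ξ) σ)‖ ≤ Λ * ‖ξ‖ * ‖σ‖) :
    (∃ C : NNReal, LipschitzOnWith C (fun p : ℝ => Delta p A) (Set.Ici 2)) ∧
      AntitoneOn (fun p : ℝ => Delta p A) (Set.Ici 2) := by
  set g : EuclideanSpace ℂ (Fin d) → ℝ := fun ξ => (@inner ℂ _ _ (mulVecE A ξ) ξ).re with hgdef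
  set h : EuclideanSpace ℂ (Fin d) → ℝ :=
    fun ξ => (@inner ℂ _ _ (mulVecE A ξ) (conjV ξ)).re with hhdef
  set t : ℝ → ℝ := fun p => 1 - 2 / p with htdef
  set S : ℝ → Set ℝ := fun p => { r : ℝ | ∃ ξ : EuclideanSpace ℂ (Fin d), ‖ξ‖ = 1 ∧
    r = (@inner ℂ _ _ (mulVecE A ξ) (Ip p ξ)).re } with hSdef
  have hDelta : ∀ p, Delta p A = sInf (S p) := fun p => rfl
  have hmem : ∀ p (ξ : EuclideanSpace ℂ (Fin d)), ‖ξ‖ = 1 → g ξ + t p * h ξ ∈ S p := by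
    intro p ξ hξ
    exact ⟨ξ, hξ, (inner_Ip A p ξ).symm⟩
  have hSform : ∀ p, ∀ r ∈ S p, ∃ ξ : EuclideanSpace ℂ (Fin d), ‖ξ‖ = 1 ∧
      r = g ξ + t p * h ξ := by
    rintro p r ⟨ξ, hξ, rfl⟩
    exact ⟨ξ, hξ, inner_Ip A p ξ⟩
  -- the basic unit vector
  have hne : ∀ p, (S p).Nonempty := by
    intro p
    refine ⟨_, EuclideanSpace.single (⟨0, hd⟩ : Fin d) (1 : ℂ), ?_, rfl⟩
    simp [EuclideanSpace.norm_single]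
  obtain ⟨ξ₀, hξ₀⟩ : ∃ ξ : EuclideanSpace ℂ (Fin d), ‖ξ‖ = 1 :=
    ⟨EuclideanSpace.single (⟨0, hd⟩ : Fin d) (1 : ℂ), by simp [EuclideanSpace.norm_single]⟩
  have hΛ0 : 0 ≤ Λ := by
    have := hΛ ξ₀ ξ₀
    rw [hξ₀] at this
    nlinarith [norm_nonneg (@inner ℂ _ _ (mulVecE A ξ₀) ξ₀)]
  have hg : ∀ ξ : EuclideanSpace ℂ (Fin d), ‖ξ‖ = 1 → |g ξ| ≤ Λ := by
    intro ξ hξ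
    have h1 := hΛ ξ ξ
    rw [hξ] at h1
    have h2 := Complex.abs_re_le_norm (@inner ℂ _ _ (mulVecE A ξ) ξ)
    have h3 : |g ξ| ≤ Λ * 1 * 1 := h2.trans h1
    linarith [h3]
  have hh : ∀ ξ : EuclideanSpace ℂ (Fin d), ‖ξ‖ = 1 → |h ξ| ≤ Λ := by
    intro ξ hξ
    have h1 := hΛ ξ (conjV ξ)
    rw [hξ, norm_conjV, hξ] at h1
    have h2 := Complex.abs_re_le_norm (@inner ℂ _ _ (mulVecE A ξ) (conjV ξ))
    have h3 : |h ξ| ≤ Λ * 1 * 1 := h2.trans h1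
    linarith [h3]
  have ht01 : ∀ p : ℝ, 2 ≤ p → 0 ≤ t p ∧ t p ≤ 1 := by
    intro p hp
    have hp0 : (0:ℝ) < p := by linarith
    constructor
    · have : 2 / p ≤ 1 := by rw [div_le_one hp0]; linarith
      simp only [htdef]; linarith
    · have : 0 ≤ 2 / p := by positivity
      simp only [htdef]; linarith
  have hbdd : ∀ p : ℝ, 2 ≤ p → BddBelow (S p) := by
    intro p hp
    refine ⟨-(Λ + Λ), ?_⟩
    intro r hr
    obtain ⟨ξ, hξ, rfl⟩ := hSform p r hr
    have h1 := hg ξ hξ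
    have h2 := hh ξ hξ
    obtain ⟨ht0, ht1⟩ := ht01 p hp
    have : |t p * h ξ| ≤ Λ := by
      rw [abs_mul, abs_of_nonneg ht0]
      nlinarith [abs_nonneg (h ξ)]
    have := abs_le.mp this
    have := abs_le.mp h1
    linarith [this.1]
  -- key Lipschitz-type inequality
  have key : ∀ p q : ℝ, 2 ≤ p → 2 ≤ q → Delta p A ≤ Delta q A + Λ * |t p - t q| := by
    intro p q hp hq
    rw [hDelta p, hDelta q, ← sub_le_iff_le_add]
    apply le_csInf (hne q)
    intro r hr
    obtain ⟨ξ, hξ, rfl⟩ := hSform q r hr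
    have h1 : sInf (S p) ≤ g ξ + t p * h ξ := csInf_le (hbdd p hp) (hmem p ξ hξ)
    have h2 := abs_le.mp (hh ξ hξ)
    have h3 : t p * h ξ - t q * h ξ ≤ |t p - t q| * Λ := by
      rw [← sub_mul]
      calc (t p - t q) * h ξ ≤ |(t p - t q) * h ξ| := le_abs_self _
        _ = |t p - t q| * |h ξ| := abs_mul _ _
        _ ≤ |t p - t q| * Λ := by
            apply mul_le_mul_of_nonneg_left (hh ξ hξ) (abs_nonneg _)
    linarith [h3]
  have hts : ∀ p q : ℝ, 2 ≤ p → 2 ≤ q → |t p - t q| ≤ |p - q| := by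
    intro p q hp hq
    have hp0 : (0:ℝ) < p := by linarith
    have hq0 : (0:ℝ) < q := by linarith
    have heq : t p - t q = 2 * (p - q) / (p * q) := by
      simp only [htdef]
      field_simp
      ring
    rw [heq, abs_div, abs_mul, abs_mul]
    rw [abs_of_pos hp0, abs_of_pos hq0]
    rw [div_le_iff₀ (by positivity)]
    have h4 : (4:ℝ) ≤ p * q := by nlinarith
    have : |(2:ℝ)| = 2 := by norm_num
    rw [this]
    nlinarith [abs_nonneg (p - q)]
  constructor
  · refine ⟨Λ.toNNReal, ?_⟩
    rw [lipschitzOnWith_iff_dist_le_mul]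
    intro p hp q hq
    simp only [Set.mem_Ici] at hp hq
    rw [Real.dist_eq, Real.dist_eq]
    have k1 := key p q hp hq
    have k2 := key q p hq hp
    have habs : |t q - t p| = |t p - t q| := abs_sub_comm _ _
    have hb : |Delta p A - Delta q A| ≤ Λ * |t p - t q| := by
      rw [abs_le]
      constructor <;> [linarith [k2, habs ▸ k2]; linarith [k1]]
    calc |Delta p A - Delta q A| ≤ Λ * |t p - t q| := hb
      _ ≤ Λ * |p - q| := mul_le_mul_of_nonneg_left (hts p q hp hq) hΛ0
      _ = (Λ.toNNReal : ℝ) * |p - q| := by rw [Real.coe_toNNReal _ hΛ0]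
  · intro p hp q hq hpq
    simp only [Set.mem_Ici] at hp hq
    simp only
    rw [hDelta p, hDelta q]
    apply le_csInf (hne p)
    intro r hr
    obtain ⟨ξ, hξ, rfl⟩ := hSform p r hr
    obtain ⟨htp0, _⟩ := ht01 p hp
    have htpq : t p ≤ t q := by
      have hp0 : (0:ℝ) < p := by linarith
      have hq0 : (0:ℝ) < q := by linarith
      have : 2 / q ≤ 2 / p := by
        apply div_le_div_of_nonneg_left (by norm_num) hp0 hpq
      simp only [htdef]; linarith
    rcases le_or_gt (h ξ) 0 with hs | hs
    · have h1 : sInf (S q) ≤ g ξ + t q * h ξ := csInf_le (hbdd q hq) (hmem q ξ hξ)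
      nlinarith
    · set ξ' : EuclideanSpace ℂ (Fin d) := Complex.I • ξ with hξ'def
      have hξ'n : ‖ξ'‖ = 1 := by
        rw [hξ'def, norm_smul, Complex.norm_I, hξ, one_mul]
      have hgξ' : g ξ' = g ξ := g_smul_I A ξ
      have hhξ' : h ξ' = -h ξ := h_smul_I A ξ
      have h1 : sInf (S q) ≤ g ξ' + t q * h ξ' := csInf_le (hbdd q hq) (hmem q ξ' hξ'n)
      rw [hgξ', hhξ'] at h1
      nlinarith
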